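/- The cut-rank function of a graph is submodular: for all X, Y ⊆ V(G), cutrk(X) + cutrk(Y) ≥ cutrk(X ∩ Y) + cutrk(X ∪ Y). -/

import Mathlib

open scoped Classical

section genaux

variable {K : Type*} [Field K] {V : Type*} [Fintype V] [DecidableEq V]

noncomputable def resL (K : Type*) [Field K] {V : Type*} (C : Finset V) :
    (V → K) →ₗ[K] (↥C → K) :=
  LinearMap.funLeft K K Subtype.val

noncomputable def rowsp (M : V → V → K) (R : Finset V) : Submodule K (V → K) :=
  Submodule.span K (M '' ↑R)

set_option synthInstance.maxHeartbeats 1000000 in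
set_option maxHeartbeats 2000000 in
lemma rn {W : Type*} [AddCommGroup W] [Module K W]
    (φ : (V → K) →ₗ[K] W) (p : Submodule K (V → K)) :
    Module.finrank K (p.map φ) + Module.finrank K ↥(p ⊓ LinearMap.ker φ) =
      Module.finrank K p := by
  have h := LinearMap.finrank_range_add_finrank_ker (φ.comp p.subtype)
  have hr : LinearMap.range (φ.comp p.subtype) = p.map φ := by
    rw [LinearMap.range_comp, Submodule.range_subtype]
  rw [hr] at h
  have hk : LinearMap.ker (φ.comp p.subtype) = Submodule.comap p.subtype (p ⊓ LinearMap.ker φ) := by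
    rw [Submodule.comap_inf, LinearMap.ker_comp]
    simp [Submodule.comap_subtype_self]
  have he : Module.finrank K ↥(Submodule.comap p.subtype (p ⊓ LinearMap.ker φ))
      = Module.finrank K ↥(p ⊓ LinearMap.ker φ) :=
    (Submodule.comapSubtypeEquivOfLe (inf_le_left : p ⊓ LinearMap.ker φ ≤ p)).finrank_eq
  rw [hk, he] at h
  exact h

lemma subrank_eq (M : V → V → K) (R C : Finset V) :
    (Matrix.of fun (a : ↥R) (b : ↥C) => M a.1 b.1).rank
      = Module.finrank K ((rowsp M R).map (resL K C)) := by
  have h1 : (Matrix.of fun (a : ↥R) (b : ↥C) => M a.1 b.1).rank = Module.finrank K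
      (Submodule.span K (Set.range ((resL K C ∘ M) ∘ (Subtype.val : ↥R → V)))) := by
    rw [Matrix.rank_eq_finrank_span_row]
    rfl
  have hr : Set.range ((resL K C ∘ M) ∘ (Subtype.val : ↥R → V))
      = resL K C '' (M '' ↑R) := by
    rw [Set.range_comp, Subtype.range_val, ← Set.image_comp]
  have hsp : Submodule.span K (resL K C '' (M '' ↑R))
      = (rowsp M R).map (resL K C) := by
    rw [rowsp, Submodule.map_span]
  rw [h1, hr, hsp]

lemma matrix_submod (M : V → V → K) (X Y : Finset V) :
    (Matrix.of fun (a : ↥(X ∩ Y)) (b : ↥((X ∩ Y)ᶜ : Finset V)) => M a.1 b.1).rank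
      + (Matrix.of fun (a : ↥(X ∪ Y)) (b : ↥((X ∪ Y)ᶜ : Finset V)) => M a.1 b.1).rank
    ≤ (Matrix.of fun (a : ↥X) (b : ↥(Xᶜ : Finset V)) => M a.1 b.1).rank
      + (Matrix.of fun (a : ↥Y) (b : ↥(Yᶜ : Finset V)) => M a.1 b.1).rank := by
  have eqX := rn (resL K Xᶜ) (rowsp M X)
  have eqY := rn (resL K Yᶜ) (rowsp M Y)
  have eqU := rn (resL K (X ∪ Y)ᶜ) (rowsp M (X ∪ Y))
  have eqI := rn (resL K (X ∩ Y)ᶜ) (rowsp M X ⊓ rowsp M Y)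
  rw [← subrank_eq] at eqX eqY eqU
  have hAB : rowsp M (X ∪ Y) = rowsp M X ⊔ rowsp M Y := by
    rw [rowsp, rowsp, rowsp, Finset.coe_union, Set.image_union, Submodule.span_union]
  have hIle : rowsp M (X ∩ Y) ≤ rowsp M X ⊓ rowsp M Y := by
    exact le_inf
      (Submodule.span_mono (Set.image_mono (Finset.coe_subset.mpr Finset.inter_subset_left)))
      (Submodule.span_mono (Set.image_mono (Finset.coe_subset.mpr Finset.inter_subset_right)))
  have hIle2 : (Matrix.of fun (a : ↥(X ∩ Y)) (b : ↥((X ∩ Y)ᶜ : Finset V)) => M a.1 b.1).rank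
      ≤ Module.finrank K ((rowsp M X ⊓ rowsp M Y).map (resL K (X ∩ Y)ᶜ)) := by
    rw [subrank_eq]
    exact Submodule.finrank_mono (Submodule.map_mono hIle)
  rw [hAB] at eqU
  -- ker comparisons
  have hkerI : LinearMap.ker (resL K (V := V) (X ∩ Y)ᶜ)
      = LinearMap.ker (resL K (V := V) Xᶜ) ⊓ LinearMap.ker (resL K (V := V) Yᶜ) := by
    ext v
    simp only [Submodule.mem_inf, LinearMap.mem_ker, resL, LinearMap.funLeft_apply]
    constructor
    · intro h
      constructor <;> ext c
      · exact congrFun h ⟨c.1, by simpa [Finset.compl_inter] using Finset.mem_union_left _ c.2⟩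
      · exact congrFun h ⟨c.1, by simpa [Finset.compl_inter] using Finset.mem_union_right _ c.2⟩
    · rintro ⟨h1, h2⟩
      ext c
      have hc : c.1 ∈ Xᶜ ∪ Yᶜ := by rw [← Finset.compl_inter]; exact c.2
      rcases Finset.mem_union.mp hc with hc | hc
      · exact congrFun h1 ⟨c.1, hc⟩
      · exact congrFun h2 ⟨c.1, hc⟩
  have hkerU : LinearMap.ker (resL K (V := V) Xᶜ) ⊔ LinearMap.ker (resL K (V := V) Yᶜ)
      ≤ LinearMap.ker (resL K (V := V) (X ∪ Y)ᶜ) := by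
    refine sup_le ?_ ?_ <;> intro v hv <;>
      simp only [LinearMap.mem_ker, resL, LinearMap.funLeft_apply] at hv ⊢ <;>
      ext c
    · have hc : c.1 ∈ Xᶜ ∩ Yᶜ := by rw [← Finset.compl_union]; exact c.2
      exact congrFun hv ⟨c.1, (Finset.mem_inter.mp hc).1⟩
    · have hc : c.1 ∈ Xᶜ ∩ Yᶜ := by rw [← Finset.compl_union]; exact c.2
      exact congrFun hv ⟨c.1, (Finset.mem_inter.mp hc).2⟩
  rw [hkerI] at eqI
  set A := rowsp M X
  set B := rowsp M Y
  set KC := LinearMap.ker (resL K (V := V) Xᶜ)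
  set KD := LinearMap.ker (resL K (V := V) Yᶜ)
  have hdim := Submodule.finrank_sup_add_finrank_inf_eq A B
  have hPQ := Submodule.finrank_sup_add_finrank_inf_eq (A ⊓ KC) (B ⊓ KD)
  have h3 : Module.finrank K ↥((A ⊓ KC) ⊔ (B ⊓ KD)) ≤
      Module.finrank K ↥((A ⊔ B) ⊓ LinearMap.ker (resL K (V := V) (X ∪ Y)ᶜ)) := by
    apply Submodule.finrank_mono
    exact sup_le (le_inf (le_trans inf_le_left le_sup_left)
        (le_trans inf_le_right (le_trans le_sup_left hkerU)))
      (le_inf (le_trans inf_le_left le_sup_right)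
        (le_trans inf_le_right (le_trans le_sup_right hkerU)))
  have h4 : Module.finrank K ↥((A ⊓ KC) ⊓ (B ⊓ KD)) ≤
      Module.finrank K ↥(A ⊓ B ⊓ (KC ⊓ KD)) := by
    apply Submodule.finrank_mono
    exact le_inf (le_inf (le_trans inf_le_left inf_le_left)
        (le_trans inf_le_right inf_le_left))
      (le_inf (le_trans inf_le_left inf_le_right)
        (le_trans inf_le_right inf_le_right))
  omega

end genaux

variable {V : Type*} [Fintype V] [DecidableEq V]

/-- GF(2)-rank of the adjacency submatrix `A_G[X, V \ X]`. -/
noncomputable def cutrk (G : SimpleGraph V) (X : Finset V) : ℕ :=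
  (Matrix.of fun (a : X) (b : (Xᶜ : Finset V)) =>
    if G.Adj a.1 b.1 then (1 : ZMod 2) else 0).rank

/-- The cutrank of a linear ordering of the vertices. -/
noncomputable def ordCutrk (G : SimpleGraph V) (e : Fin (Fintype.card V) ≃ V) : ℕ :=
  Finset.univ.sup fun i : Fin (Fintype.card V) => cutrk G ((Finset.Iic i).image e)

/-- Linear rank-width: minimum cutrank over all linear orderings of the vertices. -/
noncomputable def lrw (G : SimpleGraph V) : ℕ :=
  ⨅ e : Fin (Fintype.card V) ≃ V, ordCutrk G e

theorem stmt19 (G : SimpleGraph V) (X Y : Finset V) :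
    cutrk G (X ∩ Y) + cutrk G (X ∪ Y) ≤ cutrk G X + cutrk G Y := by
  exact matrix_submod (fun a b => if G.Adj a b then (1 : ZMod 2) else 0) X Y
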